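/- Let p, n ≥ 1, let S = (S_0, …, S_{2n}) be a truncated matrix moment sequence whose moment matrix M(n) is positive definite, and suppose x_1, …, x_ℓ ∈ ℝ are pairwise distinct, A_1, …, A_ℓ are nonzero positive semidefinite symmetric p×p matrices with S_i = Σ_{j=1}^ℓ x_j^i A_j for 0 ≤ i ≤ 2n and Σ_{j=1}^ℓ rank A_j = (n+1)p, and x_1 = t with rank A_1 = m. Define S̃_i := Σ_{j=2}^ℓ x_j^i A_j for 0 ≤ i ≤ 2n+2, and let M_S̃(n) = (S̃_{i+j−2})_{i,j=1}^{n+1} and M_S̃(n+1) = (S̃_{i+j−2})_{i,j=1}^{n+2}. Then rank M_S̃(n) = rank M_S̃(n+1) = (n+1)p − m. -/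

import Mathlib

open Matrix

section AuxRank

lemma matrix_rank_add_le {m' n' : Type*} [Fintype m'] [Fintype n']
    (A B : Matrix m' n' ℝ) : (A + B).rank ≤ A.rank + B.rank := by
  classical
  rw [Matrix.rank, Matrix.rank, Matrix.rank]
  have hr : LinearMap.range (A + B).mulVecLin ≤
      LinearMap.range A.mulVecLin ⊔ LinearMap.range B.mulVecLin := by
    rintro _ ⟨y, rfl⟩
    rw [Matrix.mulVecLin_add]
    exact Submodule.add_mem_sup (LinearMap.mem_range_self _ y) (LinearMap.mem_range_self _ y)
  exact le_trans (Submodule.finrank_mono hr)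
    (Submodule.finrank_add_le_finrank_add_finrank _ _)

lemma matrix_rank_sum_le {m' n' : Type*} [Fintype m'] [Fintype n'] {ι : Type*}
    (s : Finset ι) (f : ι → Matrix m' n' ℝ) :
    (∑ j ∈ s, f j).rank ≤ ∑ j ∈ s, (f j).rank := by
  classical
  induction s using Finset.induction_on with
  | empty => simp
  | @insert a s h ih =>
    rw [Finset.sum_insert h, Finset.sum_insert h]
    exact le_trans (matrix_rank_add_le _ _) (by omega)

lemma matrix_rank_mul_mul_le {m' n' o' q : Type*} [Fintype m'] [Fintype n'] [Fintype o']
    [Fintype q] (P : Matrix m' n' ℝ) (A : Matrix n' o' ℝ) (Q : Matrix o' q ℝ) :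
    (P * A * Q).rank ≤ A.rank :=
  le_trans (Matrix.rank_mul_le_left _ _) (Matrix.rank_mul_le_right _ _)

lemma matrix_rank_submatrix_le {m' n' : Type*} [Fintype m'] [Fintype n'] [DecidableEq m']
    (B : Matrix m' m' ℝ) (f : n' → m') : (B.submatrix f f).rank ≤ B.rank := by
  classical
  set P : Matrix n' m' ℝ := fun i k => if f i = k then 1 else 0 with hP
  have : B.submatrix f f = P * B * Pᵀ := by
    ext i j
    simp only [Matrix.submatrix_apply, Matrix.mul_apply, Matrix.transpose_apply]
    simp [hP, Matrix.mul_apply, Matrix.transpose_apply, ite_mul, mul_ite,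
      Finset.sum_ite_eq, Finset.sum_ite_eq']
  rw [this]
  exact matrix_rank_mul_mul_le _ _ _

end AuxRank

/-- The `k`-th truncated moment matrix of `S`: the `(i,j)`-th `p × p` block is
`S (i + j)` for `0 ≤ i, j ≤ k`. -/
def momentMatrix (p k : ℕ) (S : ℕ → Matrix (Fin p) (Fin p) ℝ) :
    Matrix (Fin (k + 1) × Fin p) (Fin (k + 1) × Fin p) ℝ :=
  fun i j => S (i.1.1 + j.1.1) i.2 j.2

lemma momentMatrix_sum {p k : ℕ} {ι : Type*} (s : Finset ι)
    (f : ι → ℕ → Matrix (Fin p) (Fin p) ℝ) :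
    momentMatrix p k (fun i => ∑ j ∈ s, f j i) = ∑ j ∈ s, momentMatrix p k (f j) := by
  ext q r
  simp [momentMatrix, Matrix.sum_apply]

lemma rank_atom_le (p k : ℕ) (x : ℝ) (A : Matrix (Fin p) (Fin p) ℝ) :
    (momentMatrix p k (fun i => x ^ i • A)).rank ≤ A.rank := by
  classical
  set L : Matrix (Fin (k + 1) × Fin p) (Fin p) ℝ :=
    fun q b => x ^ (q.1 : ℕ) * (if q.2 = b then 1 else 0) with hL
  have hdecomp : momentMatrix p k (fun i => x ^ i • A) = L * A * Lᵀ := by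
    ext q r
    simp only [Matrix.mul_apply, Matrix.transpose_apply]
    simp [momentMatrix, Matrix.mul_apply, hL, Matrix.transpose_apply, ite_mul, mul_ite,
      Finset.sum_ite_eq, Finset.sum_ite_eq', pow_add]
    ring
  rw [hdecomp]
  exact matrix_rank_mul_mul_le _ _ _

/-- Equations (3.4) in the proof of Theorem 1.1: removing the atom `t = x₀` of mass rank `m`
from a minimal representing measure yields a sequence `S̃` with
`rank M_S̃(n) = rank M_S̃(n+1) = (n+1)p - m`. -/
theorem rank_moment_matrix_of_removed_atom (p n ℓ : ℕ) (hp : 1 ≤ p) (hn : 1 ≤ n)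
    (S : ℕ → Matrix (Fin p) (Fin p) ℝ)
    (hSsym : ∀ i ≤ 2 * n, (S i).IsSymm)
    (hM : (momentMatrix p n S).PosDef)
    (x : Fin (ℓ + 1) → ℝ) (A : Fin (ℓ + 1) → Matrix (Fin p) (Fin p) ℝ)
    (hinj : Function.Injective x)
    (hA : ∀ j, A j ≠ 0 ∧ (A j).PosSemidef)
    (hrep : ∀ i ≤ 2 * n, S i = ∑ j, x j ^ i • A j)
    (hrank : (∑ j, (A j).rank) = (n + 1) * p)
    (t : ℝ) (m : ℕ) (hx0 : x 0 = t) (hA0 : (A 0).rank = m) :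
    (momentMatrix p n
        (fun i => ∑ j ∈ Finset.univ.erase 0, x j ^ i • A j)).rank + m = (n + 1) * p ∧
    (momentMatrix p (n + 1)
        (fun i => ∑ j ∈ Finset.univ.erase 0, x j ^ i • A j)).rank + m = (n + 1) * p := by
  classical
  set S' : ℕ → Matrix (Fin p) (Fin p) ℝ :=
    fun i => ∑ j ∈ Finset.univ.erase 0, x j ^ i • A j with hS'
  set T : ℕ → Matrix (Fin p) (Fin p) ℝ := fun i => ∑ j, x j ^ i • A j with hT
  -- rank of the full positive definite moment matrix
  have hrankM : (momentMatrix p n S).rank = (n + 1) * p := by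
    rw [Matrix.rank_of_isUnit _ ((Matrix.isUnit_iff_isUnit_det _).2
      (isUnit_iff_ne_zero.2 hM.det_pos.ne'))]
    simp [Fintype.card_prod]
  -- pointwise split of the full sum T into the atom at 0 and S'
  have hTsplit : ∀ i, T i = x 0 ^ i • A 0 + S' i := fun i =>
    (Finset.add_sum_erase _ _ (Finset.mem_univ 0)).symm
  -- M(n) over S coincides with M(n) over T
  have hSTeq : momentMatrix p n S = momentMatrix p n T := by
    ext q r
    have hle : (q.1 : ℕ) + (r.1 : ℕ) ≤ 2 * n := by
      have h1 := q.1.isLt; have h2 := r.1.isLt; omega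
    simp only [momentMatrix, hT]
    rw [hrep _ hle]
  -- decomposition at level k : momentMatrix of T = atom + momentMatrix of S'
  have hdecomp : ∀ k, momentMatrix p k T =
      momentMatrix p k (fun i => x 0 ^ i • A 0) + momentMatrix p k S' := by
    intro k
    ext q r
    have := hTsplit ((q.1 : ℕ) + (r.1 : ℕ))
    simp only [momentMatrix]
    rw [this]
    simp [momentMatrix, Matrix.add_apply]
  -- rank of the removed atom
  have hatom : ∀ k, (momentMatrix p k (fun i => x 0 ^ i • A 0)).rank ≤ m :=
    fun k => hA0 ▸ rank_atom_le p k (x 0) (A 0)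
  -- upper bound for the rank of momentMatrix of S'
  have herase : (∑ j ∈ Finset.univ.erase 0, (A j).rank) + m = (n + 1) * p := by
    rw [← hrank, ← hA0]
    exact Finset.sum_erase_add Finset.univ _ (Finset.mem_univ 0)
  have hub : ∀ k, (momentMatrix p k S').rank ≤ ∑ j ∈ Finset.univ.erase 0, (A j).rank := by
    intro k
    rw [hS', momentMatrix_sum]
    exact le_trans (matrix_rank_sum_le _ _)
      (Finset.sum_le_sum fun j _ => rank_atom_le p k (x j) (A j))
  -- lower bound at level n
  have hlow_n : (n + 1) * p ≤ (momentMatrix p n S').rank + m := by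
    have h := matrix_rank_add_le (momentMatrix p n (fun i => x 0 ^ i • A 0))
      (momentMatrix p n S')
    rw [← hdecomp, ← hSTeq, hrankM] at h
    have := hatom n
    omega
  -- lower bound at level n + 1, via the submatrix embedding
  have hlow_n1 : (n + 1) * p ≤ (momentMatrix p (n + 1) S').rank + m := by
    have hsub : momentMatrix p n T =
        (momentMatrix p (n + 1) T).submatrix
          (fun q : Fin (n + 1) × Fin p => (q.1.castSucc, q.2))
          (fun q : Fin (n + 1) × Fin p => (q.1.castSucc, q.2)) := by
      ext q r
      simp [momentMatrix, Matrix.submatrix_apply]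
    have h1 : (momentMatrix p n T).rank ≤ (momentMatrix p (n + 1) T).rank := by
      rw [hsub]
      exact matrix_rank_submatrix_le _ _
    have h2 := matrix_rank_add_le (momentMatrix p (n + 1) (fun i => x 0 ^ i • A 0))
      (momentMatrix p (n + 1) S')
    rw [← hdecomp] at h2
    have h3 : (momentMatrix p n T).rank = (n + 1) * p := by rw [← hSTeq, hrankM]
    have := hatom (n + 1)
    omega
  have hu1 := hub n
  have hu2 := hub (n + 1)
  constructor <;> omega
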